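/- arXiv:2106.05731 — 4 statements merged into one kernel-verified Lean document; each statement's English description precedes it below -/
import Mathlib

section
/- Let K be a finite type, y : K, q : K → ℝ with q y = 1, and f : K → ℝ. Then ∑_{S ∋ y} (∏_{s ∈ S, s ≠ y} q s)(∏_{t ∉ S} (1 - q t)) · (∑_{z ∈ S, z ≠ y} f z) = ∑_{z ≠ y} q z · f z. -/
open Finset in
lemma aux1 {K : Type*} [DecidableEq K] (q : K → ℝ) (A : Finset K) :
    ∑ T ∈ A.powerset, (∏ s ∈ T, q s) * ∏ t ∈ A \ T, (1 - q t) = 1 := by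
  rw [← Finset.prod_add]
  simp

open Finset in
lemma aux2 {K : Type*} [DecidableEq K] (q : K → ℝ) (A : Finset K) (z : K) (hz : z ∈ A) :
    ∑ T ∈ A.powerset.filter (fun T => z ∈ T),
      (∏ s ∈ T, q s) * ∏ t ∈ A \ T, (1 - q t) = q z := by
  have himg : A.powerset.filter (fun T => z ∈ T) = ((A.erase z).powerset).image (insert z) := by
    ext T
    simp only [mem_filter, mem_powerset, mem_image]
    constructor
    · rintro ⟨hTA, hzT⟩
      exact ⟨T.erase z, fun x hx => mem_erase.2 ⟨(mem_erase.1 hx).1, hTA (mem_erase.1 hx).2⟩,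
        by rw [insert_erase hzT]⟩
    · rintro ⟨T', hT', rfl⟩
      refine ⟨insert_subset hz (hT'.trans (erase_subset _ _)), mem_insert_self _ _⟩
  have hinj : ∀ T1 ∈ (A.erase z).powerset, ∀ T2 ∈ (A.erase z).powerset,
      insert z T1 = insert z T2 → T1 = T2 := by
    intro T1 h1 T2 h2 he
    have hz1 : z ∉ T1 := fun h => (mem_erase.1 ((mem_powerset.1 h1) h)).1 rfl
    have hz2 : z ∉ T2 := fun h => (mem_erase.1 ((mem_powerset.1 h2) h)).1 rfl
    rw [← erase_insert hz1, ← erase_insert hz2, he]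
  rw [himg, Finset.sum_image hinj]
  have hcong : ∀ T' ∈ (A.erase z).powerset,
      (∏ s ∈ insert z T', q s) * ∏ t ∈ A \ insert z T', (1 - q t)
      = q z * ((∏ s ∈ T', q s) * ∏ t ∈ (A.erase z) \ T', (1 - q t)) := by
    intro T' hT'
    have hzT' : z ∉ T' := fun h => (mem_erase.1 ((mem_powerset.1 hT') h)).1 rfl
    have hsd : A \ insert z T' = (A.erase z) \ T' := by
      ext x; simp only [mem_sdiff, mem_insert, mem_erase]; tauto
    rw [Finset.prod_insert hzT', hsd, mul_assoc]
  rw [Finset.sum_congr rfl hcong, ← Finset.mul_sum, aux1, mul_one]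

theorem stmt_2 {K : Type*} [Fintype K] [DecidableEq K] (y : K) (q : K → ℝ) (hq : q y = 1)
    (f : K → ℝ) :
    ∑ S ∈ Finset.univ.filter (fun S : Finset K => y ∈ S),
      (∏ s ∈ S.erase y, q s) * (∏ t ∈ Sᶜ, (1 - q t)) * (∑ z ∈ S.erase y, f z)
      = ∑ z ∈ Finset.univ.filter (fun z => z ≠ y), q z * f z := by
  classical
  set A : Finset K := Finset.univ.erase y with hA
  have himg : Finset.univ.filter (fun S : Finset K => y ∈ S) = A.powerset.image (insert y) := by
    ext S
    simp only [Finset.mem_filter, Finset.mem_univ, true_and, Finset.mem_image,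
      Finset.mem_powerset]
    constructor
    · intro hyS
      exact ⟨S.erase y, fun x hx => Finset.mem_erase.2 ⟨(Finset.mem_erase.1 hx).1,
        Finset.mem_univ _⟩, by rw [Finset.insert_erase hyS]⟩
    · rintro ⟨T, hT, rfl⟩; exact Finset.mem_insert_self _ _
  have hinj : ∀ T1 ∈ A.powerset, ∀ T2 ∈ A.powerset, insert y T1 = insert y T2 → T1 = T2 := by
    intro T1 h1 T2 h2 he
    have hy1 : y ∉ T1 := fun h => (Finset.mem_erase.1 ((Finset.mem_powerset.1 h1) h)).1 rfl
    have hy2 : y ∉ T2 := fun h => (Finset.mem_erase.1 ((Finset.mem_powerset.1 h2) h)).1 rfl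
    rw [← Finset.erase_insert hy1, ← Finset.erase_insert hy2, he]
  rw [himg, Finset.sum_image hinj]
  have step1 : ∀ T ∈ A.powerset,
      (∏ s ∈ (insert y T).erase y, q s) * (∏ t ∈ (insert y T)ᶜ, (1 - q t)) *
        (∑ z ∈ (insert y T).erase y, f z)
      = ∑ z ∈ A, (if z ∈ T then (∏ s ∈ T, q s) * (∏ t ∈ A \ T, (1 - q t)) * f z else 0) := by
    intro T hT
    have hyT : y ∉ T := fun h => (Finset.mem_erase.1 ((Finset.mem_powerset.1 hT) h)).1 rfl
    have hc : (insert y T)ᶜ = A \ T := by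
      ext x
      simp only [Finset.mem_compl, Finset.mem_insert, Finset.mem_sdiff, hA,
        Finset.mem_erase, Finset.mem_univ, and_true]
      tauto
    have hfil : A.filter (fun z => z ∈ T) = T :=
      (Finset.filter_mem_eq_inter).trans (Finset.inter_eq_right.2 (Finset.mem_powerset.1 hT))
    rw [Finset.erase_insert hyT, hc, Finset.mul_sum, ← Finset.sum_filter, hfil]
  rw [Finset.sum_congr rfl step1, Finset.sum_comm]
  have step2 : ∀ z ∈ A,
      (∑ T ∈ A.powerset,
        (if z ∈ T then (∏ s ∈ T, q s) * (∏ t ∈ A \ T, (1 - q t)) * f z else 0))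
      = q z * f z := by
    intro z hz
    rw [← Finset.sum_filter, ← Finset.sum_mul, aux2 q A z hz]
  rw [Finset.sum_congr rfl step2, Finset.filter_ne', hA]
end

section
/- Risk consistency of the Leveraged Weighted loss (pointwise form): Let K be a finite type, y : K, q : K → ℝ with q y = 1, w : K → ℝ, β : ℝ, and a : K → ℝ, b : K → ℝ (representing ψ(g z) and ψ(-g z) respectively). Define for each finite subset S of K the partial loss L̄(S) := ∑_{z ∈ S} w z · a z + β · ∑_{z ∉ S} w z · b z. Then ∑_{S ∋ y} (∏_{s ∈ S, s ≠ y} q s)(∏_{t ∉ S} (1 - q t)) · L̄(S) = w y · a y + ∑_{z ≠ y} w z · ((q z) · a z + β · (1 - q z) · b z). -/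
lemma aux_norm {K : Type*} [DecidableEq K] (q : K → ℝ) (U : Finset K) :
    ∑ T ∈ U.powerset, (∏ s ∈ T, q s) * (∏ t ∈ U \ T, (1 - q t)) = 1 := by
  have h := Finset.prod_add (fun i => q i) (fun i => 1 - q i) U
  simp at h
  rw [← h]

lemma aux_key {K : Type*} [DecidableEq K] (q w a b : K → ℝ) (β c : ℝ) (U : Finset K) :
    ∑ T ∈ U.powerset,
      (∏ s ∈ T, q s) * (∏ t ∈ U \ T, (1 - q t)) *
        (c + ∑ z ∈ T, w z * a z + β * ∑ z ∈ U \ T, w z * b z)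
      = c + ∑ z ∈ U, w z * (q z * a z + β * (1 - q z) * b z) := by
  induction U using Finset.induction_on with
  | empty => simp
  | @insert x U hx ih =>
    rw [Finset.sum_powerset_insert hx]
    have h1 : ∀ T ∈ U.powerset,
        (∏ s ∈ T, q s) * (∏ t ∈ insert x U \ T, (1 - q t)) *
          (c + ∑ z ∈ T, w z * a z + β * ∑ z ∈ insert x U \ T, w z * b z)
        = (∏ s ∈ T, q s) * ((1 - q x) * ∏ t ∈ U \ T, (1 - q t)) *
          (c + ∑ z ∈ T, w z * a z + β * (w x * b x + ∑ z ∈ U \ T, w z * b z)) := by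
      intro T hT
      rw [Finset.mem_powerset] at hT
      have hxT : x ∉ U \ T := by simp [hx]
      have hins : insert x U \ T = insert x (U \ T) := by
        rw [Finset.insert_sdiff_of_notMem]
        exact fun h => hx (hT h)
      rw [hins, Finset.prod_insert hxT, Finset.sum_insert hxT]
    have h2 : ∀ T ∈ U.powerset,
        (∏ s ∈ insert x T, q s) * (∏ t ∈ insert x U \ insert x T, (1 - q t)) *
          (c + ∑ z ∈ insert x T, w z * a z + β * ∑ z ∈ insert x U \ insert x T, w z * b z)
        = (q x * ∏ s ∈ T, q s) * (∏ t ∈ U \ T, (1 - q t)) *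
          (c + (w x * a x + ∑ z ∈ T, w z * a z) + β * ∑ z ∈ U \ T, w z * b z) := by
      intro T hT
      rw [Finset.mem_powerset] at hT
      have hxT : x ∉ T := fun h => hx (hT h)
      have hins : insert x U \ insert x T = U \ T := by
        ext u; simp only [Finset.mem_sdiff, Finset.mem_insert]
        constructor
        · rintro ⟨hu | hu, h2⟩
          · exact absurd (Or.inl hu) h2
          · exact ⟨hu, fun h => h2 (Or.inr h)⟩
        · rintro ⟨hu, h2⟩
          exact ⟨Or.inr hu, by rintro (rfl | h); exacts [hx hu, h2 h]⟩
      rw [hins, Finset.prod_insert hxT, Finset.sum_insert hxT]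
    rw [Finset.sum_congr rfl h1, Finset.sum_congr rfl h2]
    have norm := aux_norm q U
    have expand : ∀ T ∈ U.powerset,
        (∏ s ∈ T, q s) * ((1 - q x) * ∏ t ∈ U \ T, (1 - q t)) *
          (c + ∑ z ∈ T, w z * a z + β * (w x * b x + ∑ z ∈ U \ T, w z * b z))
        + (q x * ∏ s ∈ T, q s) * (∏ t ∈ U \ T, (1 - q t)) *
          (c + (w x * a x + ∑ z ∈ T, w z * a z) + β * ∑ z ∈ U \ T, w z * b z)
        = (∏ s ∈ T, q s) * (∏ t ∈ U \ T, (1 - q t)) *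
          (c + ∑ z ∈ T, w z * a z + β * ∑ z ∈ U \ T, w z * b z)
        + (∏ s ∈ T, q s) * (∏ t ∈ U \ T, (1 - q t)) *
          (w x * (q x * a x + β * (1 - q x) * b x)) := by
      intro T _; ring
    rw [← Finset.sum_add_distrib, Finset.sum_congr rfl expand, Finset.sum_add_distrib,
      ih, ← Finset.sum_mul, norm, Finset.sum_insert hx]
    ring

theorem stmt_4 {K : Type*} [Fintype K] [DecidableEq K] (y : K) (q : K → ℝ) (hq : q y = 1)
    (w : K → ℝ) (β : ℝ) (a b : K → ℝ) :
    ∑ S ∈ Finset.univ.filter (fun S : Finset K => y ∈ S),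
      (∏ s ∈ S.erase y, q s) * (∏ t ∈ Sᶜ, (1 - q t)) *
        ((∑ z ∈ S, w z * a z) + β * ∑ z ∈ Sᶜ, w z * b z)
      = w y * a y +
        ∑ z ∈ Finset.univ.filter (fun z => z ≠ y),
          w z * (q z * a z + β * (1 - q z) * b z) := by
  have key := aux_key q w a b β (w y * a y) (Finset.univ.erase y)
  rw [show Finset.univ.filter (fun z : K => z ≠ y) = Finset.univ.erase y from
    Finset.filter_ne' _ _, ← key]
  refine Finset.sum_bij' (fun S _ => S.erase y) (fun T _ => insert y T) ?_ ?_ ?_ ?_ ?_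
  · intro S hS
    rw [Finset.mem_filter] at hS
    rw [Finset.mem_powerset]
    exact Finset.erase_subset_erase y (Finset.subset_univ S)
  · intro T hT
    rw [Finset.mem_powerset] at hT
    simp
  · intro S hS
    rw [Finset.mem_filter] at hS
    exact Finset.insert_erase hS.2
  · intro T hT
    rw [Finset.mem_powerset] at hT
    exact Finset.erase_insert (fun h => (Finset.mem_erase.mp (hT h)).1 rfl)
  · intro S hS
    rw [Finset.mem_filter] at hS
    have hy : y ∈ S := hS.2
    have hcomp : Finset.univ.erase y \ S.erase y = Sᶜ := by
      ext u
      simp only [Finset.mem_sdiff, Finset.mem_erase, Finset.mem_compl, Finset.mem_univ,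
        true_and]
      constructor
      · rintro ⟨⟨hne, -⟩, h⟩ hu
        exact h ⟨hne, hu⟩
      · intro h
        refine ⟨⟨fun hh => h (hh ▸ hy), trivial⟩, fun hh => h hh.2⟩
    rw [hcomp, ← Finset.add_sum_erase S (fun z => w z * a z) hy]
end

section
/- Let K be a finite type, y z : K with z ≠ y, and q : K → ℝ with q y = 1. Then ∑_{S : Finset K, y ∈ S ∧ z ∈ S} (∏_{s ∈ S, s ≠ y} q s)(∏_{t ∉ S} (1 - q t)) = q z. -/
theorem stmt_6 {K : Type*} [Fintype K] [DecidableEq K] (y z : K) (hzy : z ≠ y)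
    (q : K → ℝ) (hq : q y = 1) :
    ∑ S ∈ Finset.univ.filter (fun S : Finset K => y ∈ S ∧ z ∈ S),
      (∏ s ∈ S.erase y, q s) * (∏ t ∈ Sᶜ, (1 - q t)) = q z := by
  classical
  set U : Finset K := Finset.univ \ {y, z} with hU
  have key : ∑ T ∈ U.powerset, (∏ i ∈ T, q i) * ∏ i ∈ U \ T, (1 - q i) = 1 := by
    rw [← Finset.prod_add]
    simp
  have main : ∑ S ∈ Finset.univ.filter (fun S : Finset K => y ∈ S ∧ z ∈ S),
      (∏ s ∈ S.erase y, q s) * (∏ t ∈ Sᶜ, (1 - q t)) =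
      ∑ T ∈ U.powerset, q z * ((∏ i ∈ T, q i) * ∏ i ∈ U \ T, (1 - q i)) := by
    refine Finset.sum_bij' (fun S _ => S \ {y, z}) (fun T _ => insert y (insert z T))
      ?_ ?_ ?_ ?_ ?_
    · intro S hS
      simp only [Finset.mem_filter, Finset.mem_univ, true_and] at hS
      simp only [Finset.mem_powerset, hU]
      intro a ha
      simp only [Finset.mem_sdiff] at ha ⊢
      simp [ha.2]
    · intro T hT
      simp only [Finset.mem_powerset, hU] at hT
      simp only [Finset.mem_filter, Finset.mem_univ, true_and]
      simp
    · intro S hS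
      simp only [Finset.mem_filter, Finset.mem_univ, true_and] at hS
      ext a
      simp only [Finset.mem_insert, Finset.mem_sdiff, Finset.mem_singleton]
      constructor
      · rintro (rfl | rfl | h)
        · exact hS.1
        · exact hS.2
        · exact h.1
      · intro ha
        by_cases h1 : a = y
        · exact Or.inl h1
        by_cases h2 : a = z
        · exact Or.inr (Or.inl h2)
        · exact Or.inr (Or.inr ⟨ha, by simp [h1, h2]⟩)
    · intro T hT
      simp only [Finset.mem_powerset, hU] at hT
      ext a
      simp only [Finset.mem_sdiff, Finset.mem_insert, Finset.mem_singleton]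
      constructor
      · rintro ⟨rfl | rfl | h, h2⟩
        · exact absurd (Or.inl rfl) h2
        · exact absurd (Or.inr rfl) h2
        · exact h
      · intro ha
        have := hT ha
        simp only [hU, Finset.mem_sdiff, Finset.mem_insert, Finset.mem_singleton] at this
        exact ⟨Or.inr (Or.inr ha), this.2⟩
    · intro S hS
      simp only [Finset.mem_filter, Finset.mem_univ, true_and] at hS
      have hzS : z ∈ S.erase y := Finset.mem_erase.mpr ⟨hzy, hS.2⟩
      have h1 : (S.erase y).erase z = S \ {y, z} := by
        ext a
        simp only [Finset.mem_erase, Finset.mem_sdiff, Finset.mem_insert,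
          Finset.mem_singleton]
        tauto
      have h2 : (Sᶜ : Finset K) = U \ (S \ {y, z}) := by
        ext a
        simp only [Finset.mem_compl, hU, Finset.mem_sdiff, Finset.mem_univ, true_and,
          Finset.mem_insert, Finset.mem_singleton]
        by_cases h1 : a = y
        · subst h1; simp [hS.1]
        by_cases h2 : a = z
        · subst h2; simp [hS.2]
        · simp [h1, h2]
      rw [← Finset.prod_erase_mul _ _ hzS, h1, h2]
      ring
  rw [main, ← Finset.mul_sum, key, mul_one]
end

section
/- OVA reduction: Let K be a finite type, y : K, q : K → ℝ with q y = 1 and q z ≠ 0 for all z, ψ : ℝ → ℝ with ψ(t) + ψ(-t) = 1 for all t, and g : K → ℝ. Setting w z := 1 / q z for all z, we have w y · ψ(g y) + ∑_{z ≠ y} w z · q z · (ψ(g z) + 2 · ψ(-g z)) = ψ(g y) + ∑_{z ≠ y} ψ(-g z) + (Fintype.card K - 1). -/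
theorem stmt_13 {K : Type*} [Fintype K] [DecidableEq K] (y : K) (q : K → ℝ)
    (hqy : q y = 1) (hq0 : ∀ z, q z ≠ 0) (ψ : ℝ → ℝ) (hsym : ∀ t, ψ t + ψ (-t) = 1)
    (g : K → ℝ) (w : K → ℝ) (hw : ∀ z, w z = 1 / q z) :
    w y * ψ (g y) +
        ∑ z ∈ Finset.univ.filter (fun z => z ≠ y),
          w z * q z * (ψ (g z) + 2 * ψ (-g z))
      = ψ (g y) + (∑ z ∈ Finset.univ.filter (fun z => z ≠ y), ψ (-g z)) +
          ((Fintype.card K : ℝ) - 1) := by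
  have hwy : w y = 1 := by rw [hw, hqy]; norm_num
  have hterm : ∀ z ∈ Finset.univ.filter (fun z => z ≠ y),
      w z * q z * (ψ (g z) + 2 * ψ (-g z)) = 1 + ψ (-g z) := by
    intro z _
    have h1 : w z * q z = 1 := by
      rw [hw]; field_simp [hq0 z]
    rw [h1, one_mul]
    have := hsym (g z)
    linarith
  rw [Finset.sum_congr rfl hterm, Finset.sum_add_distrib, Finset.sum_const]
  have hcard : (Finset.univ.filter (fun z => z ≠ y)).card = Fintype.card K - 1 := by
    rw [Finset.filter_ne', Finset.card_erase_of_mem (Finset.mem_univ y)]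
    rfl
  rw [hcard, hwy, nsmul_eq_mul, mul_one]
  have hpos : 1 ≤ Fintype.card K := Fintype.card_pos_iff.mpr ⟨y⟩
  push_cast [hpos]
  ring
end
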